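/- Let ζ > 1, ξ ≥ 1, β ≥ 0, ν > e^{1/(1+2β)}, n ≥ 2, and define λ_k = √(ξζ)(1 + √(2(1+2β)log(νn/k))) for 1 ≤ k ≤ n and t_k^2 = k λ_k^2 − (k−1)λ_{k−1}^2 (with λ_0 arbitrary, k ≥ 2). Then there is a constant c > 0 (depending on ζ, ξ, β, ν) such that |t_k − λ_k| ≤ c/λ_k for all 2 ≤ k ≤ n; in particular t_k / λ_k → 1 uniformly as λ_k → ∞. -/

import Mathlib

/-- The penalty constants `λ_{n,k} = √(ξζ)(1 + √(2(1+2β) log(νn/k)))`. -/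
noncomputable def lamNK (ξ ζ β ν : ℝ) (n k : ℕ) : ℝ :=
  Real.sqrt (ξ * ζ) *
    (1 + Real.sqrt (2 * (1 + 2 * β) * Real.log (ν * n / k)))

set_option maxHeartbeats 800000 in
/-- the marginal threshold `t_k` with
`t_k² = k λ_k² − (k−1) λ_{k−1}²` satisfies `|t_k − λ_k| ≤ c / λ_k`. -/
theorem stmt18 (ζ ξ β ν : ℝ) (hζ : 1 < ζ) (hξ : 1 ≤ ξ) (hβ : 0 ≤ β)
    (hν : Real.exp (1 / (1 + 2 * β)) < ν) :
    ∃ c : ℝ, 0 < c ∧ ∀ n : ℕ, 2 ≤ n → ∀ k : ℕ, 2 ≤ k → k ≤ n →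
      |Real.sqrt ((k : ℝ) * (lamNK ξ ζ β ν n k) ^ 2 -
            ((k : ℝ) - 1) * (lamNK ξ ζ β ν n (k - 1)) ^ 2) -
          lamNK ξ ζ β ν n k|
        ≤ c / lamNK ξ ζ β ν n k := by
  have hβ' : (0:ℝ) < 1 + 2 * β := by linarith
  have hν1 : (1:ℝ) < ν := by
    have h1 : (0:ℝ) < 1 / (1 + 2 * β) := by positivity
    have h2 := Real.add_one_le_exp (1 / (1 + 2 * β))
    linarith
  have hν0 : (0:ℝ) < ν := by linarith
  have hlogν : 0 < Real.log ν := Real.log_pos hν1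
  set b : ℝ := 2 * (1 + 2 * β) with hb
  have hb0 : 0 < b := by rw [hb]; linarith
  have hξζ : (1:ℝ) ≤ ξ * ζ := by nlinarith
  have hξζ0 : (0:ℝ) < ξ * ζ := by linarith
  set s0 : ℝ := Real.sqrt (b * Real.log ν) with hs0
  have hs00 : 0 < s0 := Real.sqrt_pos.mpr (by positivity)
  have hs02 : s0 ^ 2 = b * Real.log ν := Real.sq_sqrt (by positivity)
  set C : ℝ := ξ * ζ * b * (1 + 1 / s0) with hC
  have hC0 : 0 < C := by positivity
  refine ⟨C, hC0, ?_⟩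
  intro n hn k hk hkn
  have hkc : ((k - 1 : ℕ) : ℝ) = (k : ℝ) - 1 := by
    rw [Nat.cast_sub (by omega)]; simp
  have hk1 : (1:ℝ) ≤ (k:ℝ) - 1 := by
    have : (2:ℝ) ≤ (k:ℝ) := by exact_mod_cast hk
    linarith
  have hkpos : (0:ℝ) < (k:ℝ) := by linarith
  have hk1pos : (0:ℝ) < (k:ℝ) - 1 := by linarith
  have hknR : (k:ℝ) ≤ (n:ℝ) := by exact_mod_cast hkn
  have hnpos : (0:ℝ) < (n:ℝ) := by linarith
  set Lk : ℝ := Real.log (ν * n / k) with hLkdef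
  set Lk1 : ℝ := Real.log (ν * n / ((k:ℝ) - 1)) with hLk1def
  have hargk : ν ≤ ν * n / k := by
    rw [le_div_iff₀ hkpos]
    exact mul_le_mul_of_nonneg_left hknR hν0.le
  have hLklb : Real.log ν ≤ Lk := Real.log_le_log hν0 hargk
  have hLk0 : 0 < Lk := lt_of_lt_of_le hlogν hLklb
  have hargpos : 0 < ν * n / k := by positivity
  have hLk1ge : Lk ≤ Lk1 := by
    apply Real.log_le_log hargpos
    gcongr <;> linarith
  have hδ0 : 0 ≤ Lk1 - Lk := by linarith
  have hδeq : Lk1 - Lk = Real.log ((k:ℝ) / ((k:ℝ) - 1)) := by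
    rw [hLk1def, hLkdef, Real.log_div (by positivity) (by linarith),
      Real.log_div (by positivity) (by linarith),
      Real.log_div (by linarith) (by linarith)]
    ring
  have hδle : ((k:ℝ) - 1) * (Lk1 - Lk) ≤ 1 := by
    rw [hδeq]
    have h1 : Real.log ((k:ℝ) / ((k:ℝ) - 1)) ≤ (k:ℝ) / ((k:ℝ) - 1) - 1 :=
      Real.log_le_sub_one_of_pos (by positivity)
    have h2 : ((k:ℝ) - 1) * ((k:ℝ) / ((k:ℝ) - 1)) = (k:ℝ) := by field_simp
    have h3 := mul_le_mul_of_nonneg_left h1 hk1pos.le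
    rw [mul_sub, h2] at h3
    linarith
  set a : ℝ := Real.sqrt (ξ * ζ) with ha
  have ha2 : a ^ 2 = ξ * ζ := Real.sq_sqrt hξζ0.le
  have ha0 : 0 < a := Real.sqrt_pos.mpr hξζ0
  have ha1 : 1 ≤ a := by
    rw [ha, show (1:ℝ) = Real.sqrt 1 from (Real.sqrt_one).symm]
    exact Real.sqrt_le_sqrt hξζ
  set s : ℝ := Real.sqrt (b * Lk) with hs
  set s1 : ℝ := Real.sqrt (b * Lk1) with hs1
  have hs2 : s ^ 2 = b * Lk := Real.sq_sqrt (mul_nonneg hb0.le hLk0.le)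
  have hs12 : s1 ^ 2 = b * Lk1 := Real.sq_sqrt (mul_nonneg hb0.le (by linarith))
  have hss0 : s0 ≤ s :=
    Real.sqrt_le_sqrt (mul_le_mul_of_nonneg_left hLklb hb0.le)
  have hs1s0 : s0 ≤ s1 :=
    Real.sqrt_le_sqrt (mul_le_mul_of_nonneg_left (by linarith) hb0.le)
  have hsnn : 0 ≤ s := Real.sqrt_nonneg _
  have hs1nn : 0 ≤ s1 := Real.sqrt_nonneg _
  have hs1s : s ≤ s1 :=
    Real.sqrt_le_sqrt (mul_le_mul_of_nonneg_left hLk1ge hb0.le)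
  have hsdiff : (s1 - s) * (2 * s0) ≤ b * (Lk1 - Lk) := by
    have hp : 0 ≤ (s1 - s) * (s1 + s - 2 * s0) :=
      mul_nonneg (by linarith) (by linarith)
    linarith [hp, hs2, hs12]
  have hlamk : lamNK ξ ζ β ν n k = a * (1 + s) := by
    rw [lamNK, ← ha, ← hb, ← hLkdef, ← hs]
  have hlamk1 : lamNK ξ ζ β ν n (k - 1) = a * (1 + s1) := by
    rw [lamNK, ← ha, hkc, ← hb, ← hLk1def, ← hs1]
  set lk : ℝ := a * (1 + s) with hlk
  set lk1 : ℝ := a * (1 + s1) with hlk1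
  have hlkpos : 0 < lk := by
    rw [hlk]; exact mul_pos ha0 (by linarith)
  have hlkle : lk ≤ lk1 := by
    rw [hlk, hlk1]
    exact mul_le_mul_of_nonneg_left (by linarith) ha0.le
  have hE0 : 0 ≤ ((k:ℝ) - 1) * (lk1 ^ 2 - lk ^ 2) := by
    apply mul_nonneg (by linarith)
    have := pow_le_pow_left₀ hlkpos.le hlkle 2
    linarith
  have hdiffeq : lk1 ^ 2 - lk ^ 2 = (ξ * ζ) * (b * (Lk1 - Lk) + 2 * (s1 - s)) := by
    rw [hlk1, hlk]
    linear_combination ((1 + s1) ^ 2 - (1 + s) ^ 2) * ha2 + (ξ * ζ) * hs12 - (ξ * ζ) * hs2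
  have h2' : 2 * (s1 - s) ≤ b * (Lk1 - Lk) / s0 := by
    rw [le_div_iff₀ hs00]
    linarith [hsdiff]
  have hperunit : lk1 ^ 2 - lk ^ 2 ≤ (ξ * ζ) * b * (1 + 1 / s0) * (Lk1 - Lk) := by
    rw [hdiffeq, show (ξ * ζ) * b * (1 + 1 / s0) * (Lk1 - Lk)
        = (ξ * ζ) * (b * (Lk1 - Lk) + b * (Lk1 - Lk) / s0) from by field_simp]
    exact mul_le_mul_of_nonneg_left (by linarith [h2']) hξζ0.le
  have hEC : ((k:ℝ) - 1) * (lk1 ^ 2 - lk ^ 2) ≤ C := by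
    have h6 : 0 ≤ (ξ * ζ) * b * (1 + 1 / s0) := by positivity
    calc ((k:ℝ) - 1) * (lk1 ^ 2 - lk ^ 2)
        ≤ ((k:ℝ) - 1) * ((ξ * ζ) * b * (1 + 1 / s0) * (Lk1 - Lk)) :=
          mul_le_mul_of_nonneg_left hperunit (by linarith)
      _ = (ξ * ζ) * b * (1 + 1 / s0) * (((k:ℝ) - 1) * (Lk1 - Lk)) := by ring
      _ ≤ (ξ * ζ) * b * (1 + 1 / s0) * 1 := mul_le_mul_of_nonneg_left hδle h6
      _ = C := by rw [hC]; ring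
  have hSeq : (k : ℝ) * (lamNK ξ ζ β ν n k) ^ 2 -
      ((k : ℝ) - 1) * (lamNK ξ ζ β ν n (k - 1)) ^ 2
      = lk ^ 2 - ((k:ℝ) - 1) * (lk1 ^ 2 - lk ^ 2) := by
    rw [hlamk, hlamk1]; ring
  rw [hSeq, hlamk]
  set S : ℝ := lk ^ 2 - ((k:ℝ) - 1) * (lk1 ^ 2 - lk ^ 2) with hSdef
  rcases le_or_gt 0 S with hS | hS
  · set t : ℝ := Real.sqrt S with ht
    have ht2 : t ^ 2 = S := Real.sq_sqrt hS
    have ht0 : 0 ≤ t := Real.sqrt_nonneg _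
    have hSle : S ≤ lk ^ 2 := by rw [hSdef]; linarith
    have htle : t ≤ lk := by
      rw [ht]
      calc Real.sqrt S ≤ Real.sqrt (lk ^ 2) := Real.sqrt_le_sqrt hSle
        _ = lk := Real.sqrt_sq hlkpos.le
    rw [abs_of_nonpos (by linarith), le_div_iff₀ hlkpos]
    have hq : 0 ≤ (lk - t) * t := mul_nonneg (by linarith) ht0
    linarith [hq, ht2, hEC]
  · rw [Real.sqrt_eq_zero_of_nonpos hS.le]
    rw [abs_of_nonpos (by linarith), le_div_iff₀ hlkpos]
    linarith [hS, hEC]
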